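/- If η ~ HG(n,s,s) and ξ ~ Bin(s, s/n), then E[f(η)] ≤ E[f(ξ)] for every continuous convex function f: ℝ → ℝ; in particular E[exp(λη)] ≤ E[exp(λξ)] for all real λ. -/

import Mathlib

open Finset

private lemma const_on_eq_sum_div {α : Type*} (P : Finset α) (g : α → ℝ)
    (h : ∀ a ∈ P, ∀ b ∈ P, g a = g b) {a : α} (ha : a ∈ P) :
    g a = (∑ b ∈ P, g b) / P.card := by
  have : ∑ b ∈ P, g b = P.card * g a := by
    rw [Finset.sum_congr rfl (fun b hb => h b hb a ha)]
    simp [mul_comm]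
  rw [this]
  have hP : (0:ℝ) < P.card := by
    exact_mod_cast Finset.card_pos.mpr ⟨a, ha⟩
  field_simp

private lemma exists_perm_image {n : ℕ} (T T' : Finset (Fin n)) (h : T.card = T'.card) :
    ∃ σ : Equiv.Perm (Fin n), T.image σ = T' := by
  have hc : (Tᶜ).card = (T'ᶜ).card := by simp [Finset.card_compl, h]
  let e1 : {x // x ∈ T} ≃ {x // x ∈ T'} := Finset.equivOfCardEq h
  let e2 : {x // x ∈ Tᶜ} ≃ {x // x ∈ T'ᶜ} := Finset.equivOfCardEq hc
  let e2' : {x // ¬ x ∈ T} ≃ {x // ¬ x ∈ T'} :=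
    ((Equiv.subtypeEquivRight (fun x => (Finset.mem_compl).symm)).trans e2).trans
      (Equiv.subtypeEquivRight (fun x => Finset.mem_compl))
  refine ⟨(Equiv.sumCompl (· ∈ T)).symm.trans ((Equiv.sumCongr e1 e2').trans
    (Equiv.sumCompl (· ∈ T'))), ?_⟩
  apply Finset.eq_of_subset_of_card_le
  · intro x hx
    simp only [Finset.mem_image] at hx
    obtain ⟨a, ha, rfl⟩ := hx
    simp only [Equiv.trans_apply, Equiv.sumCompl_symm_apply_of_pos ha, Equiv.sumCongr_apply,
      Sum.map_inl, Equiv.sumCompl_apply_inl]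
    exact (e1 ⟨a, ha⟩).2
  · rw [Finset.card_image_of_injective _ (Equiv.injective _), h]

private lemma card_supersets {n k s : ℕ} (hks : k ≤ s) (D : Finset (Fin n)) (hD : D.card = k) :
    ((Finset.powersetCard s (univ : Finset (Fin n))).filter (fun T => D ⊆ T)).card
      = (n - k).choose (s - k) := by
  have : ((Finset.powersetCard s (univ : Finset (Fin n))).filter (fun T => D ⊆ T)).card
      = (Finset.powersetCard (s - k) Dᶜ).card := by
    apply Finset.card_bij (fun T _ => T \ D)
    · intro T hT
      simp only [Finset.mem_filter, Finset.mem_powersetCard] at hT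
      obtain ⟨⟨_, hcard⟩, hsub⟩ := hT
      rw [Finset.mem_powersetCard]
      constructor
      · intro x hx
        simp only [Finset.mem_sdiff] at hx
        simp [hx.2]
      · rw [Finset.card_sdiff_of_subset hsub, hcard, hD]
    · intro T hT T' hT' heq
      simp only [Finset.mem_filter, Finset.mem_powersetCard] at hT hT'
      have : T \ D ∪ D = T' \ D ∪ D := by rw [heq]
      rwa [Finset.sdiff_union_of_subset hT.2, Finset.sdiff_union_of_subset hT'.2] at this
    · intro S hS
      rw [Finset.mem_powersetCard] at hS
      have hdisj : Disjoint S D := by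
        intro U hU hU2 x hx
        have := hS.1 (hU hx)
        simp only [Finset.mem_compl] at this
        exact absurd (hU2 hx) this
      refine ⟨S ∪ D, ?_, ?_⟩
      · simp only [Finset.mem_filter, Finset.mem_powersetCard]
        refine ⟨⟨Finset.subset_univ _, ?_⟩, Finset.subset_union_right⟩
        rw [Finset.card_union_of_disjoint hdisj, hS.2, hD]
        omega
      · rw [Finset.union_sdiff_right, Finset.sdiff_eq_self_of_disjoint hdisj]
  rw [this, Finset.card_powersetCard, Finset.card_compl, hD]
  simp

noncomputable def cw (n s : ℕ) (y : Fin s → Fin n) : ℝ :=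
  (((n - (Finset.image y Finset.univ).card).choose (s - (Finset.image y Finset.univ).card) : ℝ)
    * (n:ℝ)^s)⁻¹

private lemma K_le {n s : ℕ} (y : Fin s → Fin n) : (Finset.image y Finset.univ).card ≤ s := by
  calc (Finset.image y Finset.univ).card ≤ (Finset.univ : Finset (Fin s)).card :=
        Finset.card_image_le
    _ = s := by simp

private lemma cw_pos {n s : ℕ} (hs : s ≤ n) (hn : 0 < n) (y : Fin s → Fin n) : 0 < cw n s y := by
  have hk := K_le y
  apply inv_pos.mpr
  apply mul_pos
  · exact_mod_cast Nat.choose_pos (by omega)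
  · positivity

private lemma sum_reindex_perm {n s : ℕ} (σ : Equiv.Perm (Fin n)) (F : (Fin s → Fin n) → ℝ) :
    ∑ y : Fin s → Fin n, F (σ ∘ y) = ∑ y : Fin s → Fin n, F y := by
  apply Fintype.sum_equiv (Equiv.arrowCongr (Equiv.refl (Fin s)) σ)
  intro y
  rfl

private lemma image_comp_perm {n s : ℕ} (σ : Equiv.Perm (Fin n)) (y : Fin s → Fin n) :
    Finset.image (σ ∘ y) Finset.univ = Finset.image σ (Finset.image y Finset.univ) := by
  rw [Finset.image_image]

private lemma cw_comp {n s : ℕ} (σ : Equiv.Perm (Fin n)) (y : Fin s → Fin n) :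
    cw n s (σ ∘ y) = cw n s y := by
  unfold cw
  rw [image_comp_perm, Finset.card_image_of_injective _ σ.injective]

private lemma rowsum {n s : ℕ} (hs : s ≤ n) (hn : 0 < n) (y : Fin s → Fin n) :
    ∑ T ∈ Finset.powersetCard s (univ : Finset (Fin n)),
      (if Finset.image y Finset.univ ⊆ T then cw n s y else 0) = ((n:ℝ)^s)⁻¹ := by
  rw [Finset.sum_ite, Finset.sum_const, Finset.sum_const_zero, add_zero,
    card_supersets (K_le y) _ rfl]
  unfold cw
  have hk := K_le y
  have hpos : (0:ℝ) < ((n - (Finset.image y Finset.univ).card).choose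
      (s - (Finset.image y Finset.univ).card) : ℝ) := by
    exact_mod_cast Nat.choose_pos (by omega)
  have hnp : (0:ℝ) < (n:ℝ)^s := by positivity
  rw [nsmul_eq_mul]
  field_simp

noncomputable def WW (n s : ℕ) (T : Finset (Fin n)) : ℝ :=
  ∑ y : Fin s → Fin n, if Finset.image y Finset.univ ⊆ T then cw n s y else 0

private lemma WW_comp {n s : ℕ} (σ : Equiv.Perm (Fin n)) (T : Finset (Fin n)) :
    WW n s (T.image σ) = WW n s T := by
  unfold WW
  rw [← sum_reindex_perm σ (fun y => if Finset.image y Finset.univ ⊆ T.image σ then cw n s y else 0)]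
  apply Finset.sum_congr rfl
  intro y _
  rw [cw_comp, image_comp_perm]
  simp [Finset.image_subset_image_iff σ.injective]

private lemma WW_const {n s : ℕ} (T T' : Finset (Fin n))
    (hT : T ∈ Finset.powersetCard s (univ : Finset (Fin n)))
    (hT' : T' ∈ Finset.powersetCard s (univ : Finset (Fin n))) : WW n s T = WW n s T' := by
  rw [Finset.mem_powersetCard] at hT hT'
  obtain ⟨σ, hσ⟩ := exists_perm_image T T' (hT.2.trans hT'.2.symm)
  rw [← hσ, WW_comp]

private lemma WW_total {n s : ℕ} (hs : s ≤ n) (hn : 0 < n) :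
    ∑ T ∈ Finset.powersetCard s (univ : Finset (Fin n)), WW n s T = 1 := by
  unfold WW
  rw [Finset.sum_comm]
  rw [Finset.sum_congr rfl (fun y _ => rowsum hs hn y)]
  simp only [Finset.sum_const, Finset.card_univ, nsmul_eq_mul]
  rw [Fintype.card_fun]
  have : (0:ℝ) < (n:ℝ)^s := by positivity
  simp only [Fintype.card_fin]
  push_cast
  field_simp

private lemma WW_eq {n s : ℕ} (hs : s ≤ n) (hn : 0 < n) (T : Finset (Fin n))
    (hT : T ∈ Finset.powersetCard s (univ : Finset (Fin n))) :
    WW n s T = ((n.choose s : ℝ))⁻¹ := by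
  have := const_on_eq_sum_div (Finset.powersetCard s (univ : Finset (Fin n))) (WW n s)
    (fun a ha b hb => WW_const a b ha hb) hT
  rw [WW_total hs hn, Finset.card_powersetCard, Finset.card_univ, Fintype.card_fin] at this
  rw [this, one_div]

private lemma WW_def (n s : ℕ) (T : Finset (Fin n)) : WW n s T =
    ∑ y : Fin s → Fin n, if Finset.image y Finset.univ ⊆ T then cw n s y else 0 := rfl
noncomputable def MM (n s : ℕ) (T : Finset (Fin n)) (x : Fin n) : ℝ :=
  ∑ y : Fin s → Fin n, (if Finset.image y Finset.univ ⊆ T then cw n s y else 0)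
    * ((Finset.univ.filter (fun t => y t = x)).card : ℝ)

private lemma image_swap_eq {n : ℕ} {T : Finset (Fin n)} {x x' : Fin n}
    (hx : x ∈ T) (hx' : x' ∈ T) : T.image (Equiv.swap x x') = T := by
  apply Finset.eq_of_subset_of_card_le
  · intro a ha
    simp only [Finset.mem_image] at ha
    obtain ⟨b, hb, rfl⟩ := ha
    rcases eq_or_ne b x with rfl | h1
    · rwa [Equiv.swap_apply_left]
    rcases eq_or_ne b x' with rfl | h2
    · rwa [Equiv.swap_apply_right]
    · rwa [Equiv.swap_apply_of_ne_of_ne h1 h2]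
  · rw [Finset.card_image_of_injective _ (Equiv.injective _)]

private lemma MM_comp {n s : ℕ} (σ : Equiv.Perm (Fin n)) (T : Finset (Fin n))
    (hσT : T.image σ = T) (x : Fin n) : MM n s T (σ x) = MM n s T x := by
  unfold MM
  rw [← sum_reindex_perm σ (fun y => (if Finset.image y Finset.univ ⊆ T then cw n s y else 0)
    * ((Finset.univ.filter (fun t => y t = σ x)).card : ℝ))]
  apply Finset.sum_congr rfl
  intro y _
  rw [cw_comp, image_comp_perm]
  have h1 : Finset.image σ (Finset.image y Finset.univ) ⊆ T ↔ Finset.image y Finset.univ ⊆ T := by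
    conv_lhs => rw [← hσT]
    exact Finset.image_subset_image_iff σ.injective
  have h2 : (Finset.univ.filter (fun t => (σ ∘ y) t = σ x)) =
      (Finset.univ.filter (fun t => y t = x)) := by
    apply Finset.filter_congr
    intro t _
    simp [σ.injective.eq_iff]
  rw [h2]
  simp [h1]

private lemma MM_zero {n s : ℕ} {T : Finset (Fin n)} {x : Fin n} (hx : x ∉ T) :
    MM n s T x = 0 := by
  unfold MM
  apply Finset.sum_eq_zero
  intro y _
  by_cases h : Finset.image y Finset.univ ⊆ T
  · have : (Finset.univ.filter (fun t => y t = x)) = ∅ := by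
      apply Finset.filter_eq_empty_iff.mpr
      intro t _
      intro he
      exact hx (h (Finset.mem_image.mpr ⟨t, Finset.mem_univ t, he⟩))
    simp [this]
  · simp [h]

private lemma MM_total {n s : ℕ} (T : Finset (Fin n)) :
    ∑ x : Fin n, MM n s T x = s * WW n s T := by
  unfold MM
  rw [Finset.sum_comm, WW_def, Finset.mul_sum]
  apply Finset.sum_congr rfl
  intro y _
  rw [← Finset.mul_sum]
  have : ∑ x : Fin n, ((Finset.univ.filter (fun t => y t = x)).card : ℝ) = s := by
    have h := Finset.sum_fiberwise_of_maps_to (g := y) (s := (Finset.univ : Finset (Fin s)))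
      (t := (Finset.univ : Finset (Fin n))) (fun i _ => Finset.mem_univ (y i)) (fun _ => (1:ℝ))
    simp only [Finset.sum_const, nsmul_eq_mul, mul_one] at h
    simp only [Finset.card_univ, Fintype.card_fin] at h
    convert h using 2
  rw [this, mul_comm]

private lemma MM_eq {n s : ℕ} (hs : s ≤ n) (hn : 0 < n) {T : Finset (Fin n)}
    (hT : T ∈ Finset.powersetCard s (univ : Finset (Fin n))) {x : Fin n} (hx : x ∈ T) :
    MM n s T x = ((n.choose s : ℝ))⁻¹ := by
  have hconst : ∀ x' ∈ T, MM n s T x' = MM n s T x := by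
    intro x' hx'
    have := MM_comp (s := s) (Equiv.swap x x') T (image_swap_eq hx hx') x
    rwa [Equiv.swap_apply_left] at this
  have hTcard : T.card = s := (Finset.mem_powersetCard.mp hT).2
  have htot : ∑ x' ∈ T, MM n s T x' = s * WW n s T := by
    rw [← MM_total (s := s) T]
    apply Finset.sum_subset (Finset.subset_univ T)
    intro x' _ hx'
    exact MM_zero hx'
  rw [Finset.sum_congr rfl hconst, Finset.sum_const, hTcard, nsmul_eq_mul, WW_eq hs hn T hT]
    at htot
  have hs0 : (0:ℝ) < s := by
    have : 0 < T.card := Finset.card_pos.mpr ⟨x, hx⟩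
    exact_mod_cast hTcard ▸ this
  exact mul_left_cancel₀ (ne_of_gt hs0) htot

private lemma key_mean {n s : ℕ} (hs : s ≤ n) (hn : 0 < n) (B : Finset (Fin n))
    {T : Finset (Fin n)} (hT : T ∈ Finset.powersetCard s (univ : Finset (Fin n))) :
    ∑ y : Fin s → Fin n, (if Finset.image y Finset.univ ⊆ T then cw n s y else 0)
      * ((Finset.univ.filter (fun t => y t ∈ B)).card : ℝ)
    = ((T ∩ B).card : ℝ) * ((n.choose s : ℝ))⁻¹ := by
  have hN : ∀ y : Fin s → Fin n, ((Finset.univ.filter (fun t => y t ∈ B)).card : ℝ)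
      = ∑ x ∈ B, ((Finset.univ.filter (fun t => y t = x)).card : ℝ) := by
    intro y
    have h : (Finset.univ.filter (fun t => y t ∈ B)).card
        = ∑ x ∈ B, (Finset.univ.filter (fun t => y t = x)).card := by
      simp only [Finset.card_filter]
      rw [Finset.sum_comm]
      apply Finset.sum_congr rfl
      intro t _
      rw [Finset.sum_ite_eq B (y t) (fun _ => (1:ℕ))]
    rw [h]
    push_cast
    ring
  calc ∑ y : Fin s → Fin n, (if Finset.image y Finset.univ ⊆ T then cw n s y else 0)
      * ((Finset.univ.filter (fun t => y t ∈ B)).card : ℝ)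
      = ∑ x ∈ B, MM n s T x := by
        unfold MM
        rw [Finset.sum_comm]
        apply Finset.sum_congr rfl
        intro y _
        rw [hN y, Finset.mul_sum]
    _ = ∑ x ∈ T ∩ B, ((n.choose s : ℝ))⁻¹ := by
        rw [← Finset.sum_subset (Finset.inter_subset_right (s₁ := T))]
        · apply Finset.sum_congr rfl
          intro x hx
          exact MM_eq hs hn hT (Finset.mem_inter.mp hx).1
        · intro x hxB hxnT
          apply MM_zero
          intro hxT
          exact hxnT (Finset.mem_inter.mpr ⟨hxT, hxB⟩)
    _ = ((T ∩ B).card : ℝ) * ((n.choose s : ℝ))⁻¹ := by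
        rw [Finset.sum_const, nsmul_eq_mul]

private lemma perm_fiber_const {n : ℕ} (A : Finset (Fin n)) (σ : Equiv.Perm (Fin n))
    (T : Finset (Fin n)) :
    ((univ : Finset (Equiv.Perm (Fin n))).filter (fun π : Equiv.Perm (Fin n) => A.image ⇑π = T.image σ)).card
    = ((univ : Finset (Equiv.Perm (Fin n))).filter (fun π : Equiv.Perm (Fin n) => A.image ⇑π = T)).card := by
  apply Finset.card_bij (fun π _ => σ⁻¹ * π)
  · intro π hπ
    simp only [Finset.mem_filter, Finset.mem_univ, true_and] at hπ ⊢
    have : A.image ⇑(σ⁻¹ * π) = (A.image ⇑π).image ⇑σ⁻¹ := by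
      rw [Equiv.Perm.coe_mul, ← Finset.image_image]
    rw [this, hπ, Finset.image_image]
    simp only [Equiv.Perm.inv_def]
    rw [show (⇑σ.symm ∘ ⇑σ) = id from funext (fun x => σ.symm_apply_apply x), Finset.image_id]
  · intro π hπ π' hπ' h
    exact mul_left_cancel h
  · intro τ hτ
    simp only [Finset.mem_filter, Finset.mem_univ, true_and] at hτ
    refine ⟨σ * τ, ?_, by group⟩
    simp only [Finset.mem_filter, Finset.mem_univ, true_and]
    rw [Equiv.Perm.coe_mul, ← Finset.image_image, hτ]

private lemma perm_fiber_card {n s : ℕ} (A : Finset (Fin n)) (hA : A.card = s)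
    {T : Finset (Fin n)} (hT : T ∈ Finset.powersetCard s (univ : Finset (Fin n))) :
    (((univ : Finset (Equiv.Perm (Fin n))).filter (fun π : Equiv.Perm (Fin n) => A.image ⇑π = T)).card : ℝ)
    = (n.factorial : ℝ) / (n.choose s : ℝ) := by
  have hmaps : ∀ π : Equiv.Perm (Fin n), π ∈ (univ : Finset (Equiv.Perm (Fin n))) →
      A.image π ∈ Finset.powersetCard s (univ : Finset (Fin n)) := by
    intro π _
    rw [Finset.mem_powersetCard]
    exact ⟨Finset.subset_univ _, by rw [Finset.card_image_of_injective _ π.injective, hA]⟩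
  have hconst : ∀ T₁ ∈ Finset.powersetCard s (univ : Finset (Fin n)),
      ∀ T₂ ∈ Finset.powersetCard s (univ : Finset (Fin n)),
      ((((univ : Finset (Equiv.Perm (Fin n))).filter (fun π : Equiv.Perm (Fin n) => A.image ⇑π = T₁)).card : ℝ))
      = (((univ : Finset (Equiv.Perm (Fin n))).filter (fun π : Equiv.Perm (Fin n) => A.image ⇑π = T₂)).card : ℝ) := by
    intro T₁ h₁ T₂ h₂
    have hc : T₂.card = T₁.card := by
      rw [Finset.mem_powersetCard] at h₁ h₂
      rw [h₂.2, h₁.2]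
    obtain ⟨σ, hσ⟩ := exists_perm_image T₂ T₁ hc
    rw [← hσ]
    exact_mod_cast congrArg Nat.cast (perm_fiber_const A σ T₂)
  have := const_on_eq_sum_div (Finset.powersetCard s (univ : Finset (Fin n)))
    (fun T' => (((univ : Finset (Equiv.Perm (Fin n))).filter
      (fun π : Equiv.Perm (Fin n) => A.image ⇑π = T')).card : ℝ)) hconst hT
  rw [this]
  have htotal : ∑ T' ∈ Finset.powersetCard s (univ : Finset (Fin n)),
      ((((univ : Finset (Equiv.Perm (Fin n))).filter (fun π : Equiv.Perm (Fin n) => A.image ⇑π = T')).card : ℝ))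
      = (n.factorial : ℝ) := by
    have h2 := Finset.sum_fiberwise_of_maps_to hmaps (fun _ => (1:ℝ))
    simp only [Finset.sum_const, nsmul_eq_mul, mul_one] at h2
    rw [h2]
    simp [Finset.card_univ, Fintype.card_perm, Fintype.card_fin]
  rw [htotal, Finset.card_powersetCard, Finset.card_univ, Fintype.card_fin]

private lemma fiber_card_piFinset {n s : ℕ} (B : Finset (Fin n)) (hB : B.card = s)
    (U : Finset (Fin s)) :
    ((univ : Finset (Fin s → Fin n)).filter
      (fun y => univ.filter (fun t => y t ∈ B) = U)).card
    = s ^ U.card * (n - s) ^ (s - U.card) := by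
  have hset : ((univ : Finset (Fin s → Fin n)).filter
      (fun y => univ.filter (fun t => y t ∈ B) = U))
      = Fintype.piFinset (fun t => if t ∈ U then B else Bᶜ) := by
    ext y
    simp only [Finset.mem_filter, Finset.mem_univ, true_and, Fintype.mem_piFinset]
    constructor
    · intro h t
      by_cases ht : t ∈ U
      · simp only [ht, if_true]
        have : t ∈ univ.filter (fun t => y t ∈ B) := h ▸ ht
        exact (Finset.mem_filter.mp this).2
      · simp only [ht, if_false, Finset.mem_compl]
        intro hyt
        exact ht (h ▸ Finset.mem_filter.mpr ⟨Finset.mem_univ t, hyt⟩)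
    · intro h
      ext t
      simp only [Finset.mem_filter, Finset.mem_univ, true_and]
      constructor
      · intro hyt
        by_contra ht
        have := h t
        simp only [ht, if_false, Finset.mem_compl] at this
        exact this hyt
      · intro ht
        have := h t
        simpa only [ht, if_true] using this
  rw [hset, Fintype.card_piFinset]
  have : ∀ t : Fin s, (if t ∈ U then B else Bᶜ).card = if t ∈ U then s else n - s := by
    intro t
    by_cases ht : t ∈ U <;> simp [ht, hB, Finset.card_compl]
  rw [Finset.prod_congr rfl (fun t _ => this t), Finset.prod_ite, Finset.prod_const,
    Finset.prod_const]
  congr 1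
  · congr 1
    simp
  · congr 1
    rw [Finset.filter_not]
    rw [Finset.card_sdiff_of_subset (by intro x hx; exact Finset.mem_univ x)]
    congr 1
    · simp
    · simp

private lemma binom_count {n s : ℕ} (B : Finset (Fin n)) (hB : B.card = s)
    (f : ℝ → ℝ) :
    ∑ y : Fin s → Fin n, f (((univ.filter (fun t => y t ∈ B)).card : ℕ) : ℝ)
    = ∑ k ∈ Finset.range (s+1),
        ((s.choose k : ℕ) : ℝ) * ((s ^ k * (n - s) ^ (s - k) : ℕ) : ℝ) * f k := by
  have h1 := Finset.sum_fiberwise_of_maps_to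
    (g := fun y : Fin s → Fin n => univ.filter (fun t => y t ∈ B))
    (s := (univ : Finset (Fin s → Fin n)))
    (t := (univ : Finset (Fin s)).powerset)
    (fun y _ => Finset.mem_powerset.mpr (Finset.filter_subset _ _))
    (fun y => f (((univ.filter (fun t => y t ∈ B)).card : ℕ) : ℝ))
  rw [← h1]
  have h2 : ∀ U ∈ (univ : Finset (Fin s)).powerset,
      ∑ y ∈ (univ : Finset (Fin s → Fin n)).filter
        (fun y => univ.filter (fun t => y t ∈ B) = U),
        f (((univ.filter (fun t => y t ∈ B)).card : ℕ) : ℝ)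
      = ((s ^ U.card * (n - s) ^ (s - U.card) : ℕ) : ℝ) * f U.card := by
    intro U _
    rw [Finset.sum_congr rfl (fun y hy => by
      rw [(Finset.mem_filter.mp hy).2]), Finset.sum_const, nsmul_eq_mul,
      fiber_card_piFinset B hB U]
  rw [Finset.sum_congr rfl h2]
  -- now group by cardinality
  have h3 := Finset.sum_fiberwise_of_maps_to
    (g := fun U : Finset (Fin s) => U.card)
    (s := (univ : Finset (Fin s)).powerset)
    (t := Finset.range (s+1))
    (fun U hU => by
      rw [Finset.mem_range, Nat.lt_succ_iff]
      have h4 : U.card ≤ (univ : Finset (Fin s)).card :=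
        Finset.card_le_card (Finset.mem_powerset.mp hU)
      simpa using h4)
    (fun U => ((s ^ U.card * (n - s) ^ (s - U.card) : ℕ) : ℝ) * f U.card)
  rw [← h3]
  apply Finset.sum_congr rfl
  intro k hk
  rw [Finset.sum_congr rfl (fun U hU => by
    rw [(Finset.mem_filter.mp hU).2]), Finset.sum_const, nsmul_eq_mul]
  have : (univ : Finset (Fin s)).powerset.filter (fun U => U.card = k)
      = Finset.powersetCard k (univ : Finset (Fin s)) := by
    rw [Finset.powersetCard_eq_filter]
  rw [this, Finset.card_powersetCard, Finset.card_univ, Fintype.card_fin]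
  ring

private lemma main_ineq {n s : ℕ} (hs : s ≤ n) (hn : 0 < n)
    (A B : Finset (Fin n)) (hA : A.card = s) (hB : B.card = s)
    (f : ℝ → ℝ) (hconv : ConvexOn ℝ Set.univ f) :
    (∑ π : Equiv.Perm (Fin n), f ((((A.image π) ∩ B).card : ℝ))) / (n.factorial : ℝ)
      ≤ ∑ k ∈ Finset.range (s + 1),
          (s.choose k : ℝ) * ((s : ℝ) / n) ^ k * (1 - (s : ℝ) / n) ^ (s - k) * f k := by
  set P := Finset.powersetCard s (univ : Finset (Fin n)) with hP
  have hC : (0:ℝ) < (n.choose s : ℝ) := by exact_mod_cast Nat.choose_pos hs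
  have hF : (0:ℝ) < (n.factorial : ℝ) := by exact_mod_cast Nat.factorial_pos n
  -- Step A : express permutation sum as sum over s-subsets
  have stepA : (∑ π : Equiv.Perm (Fin n), f ((((A.image π) ∩ B).card : ℝ))) / (n.factorial : ℝ)
      = ∑ T ∈ P, ((n.choose s : ℝ))⁻¹ * f (((T ∩ B).card : ℝ)) := by
    have hmaps : ∀ π : Equiv.Perm (Fin n), π ∈ (univ : Finset (Equiv.Perm (Fin n))) →
        A.image ⇑π ∈ P := by
      intro π _
      rw [hP, Finset.mem_powersetCard]
      exact ⟨Finset.subset_univ _, by rw [Finset.card_image_of_injective _ π.injective, hA]⟩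
    have h1 := Finset.sum_fiberwise_of_maps_to hmaps
      (fun π => f ((((A.image ⇑π) ∩ B).card : ℝ)))
    rw [← h1]
    have h2 : ∀ T ∈ P, ∑ π ∈ (univ : Finset (Equiv.Perm (Fin n))).filter
        (fun π : Equiv.Perm (Fin n) => A.image ⇑π = T), f ((((A.image ⇑π) ∩ B).card : ℝ))
        = ((n.factorial : ℝ) / (n.choose s : ℝ)) * f (((T ∩ B).card : ℝ)) := by
      intro T hT
      rw [Finset.sum_congr rfl (fun π hπ => by
        rw [(Finset.mem_filter.mp hπ).2]), Finset.sum_const, nsmul_eq_mul,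
        perm_fiber_card A hA hT]
    rw [Finset.sum_congr rfl h2, Finset.sum_div]
    apply Finset.sum_congr rfl
    intro T _
    rw [div_mul_eq_mul_div, div_div]
    rw [eq_comm, inv_mul_eq_div, div_eq_div_iff (ne_of_gt hC) (by positivity)]
    ring
  rw [stepA]
  -- Step B : Jensen per T
  have stepB : ∀ T ∈ P, ((n.choose s : ℝ))⁻¹ * f (((T ∩ B).card : ℝ))
      ≤ ∑ y : Fin s → Fin n, (if Finset.image y Finset.univ ⊆ T then cw n s y else 0)
          * f (((univ.filter (fun t => y t ∈ B)).card : ℝ)) := by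
    intro T hT
    have hw0 : ∀ y : Fin s → Fin n, y ∈ (univ : Finset (Fin s → Fin n)) →
        0 ≤ (if Finset.image y Finset.univ ⊆ T then cw n s y else 0) := by
      intro y _
      split
      · exact le_of_lt (cw_pos hs hn y)
      · exact le_refl 0
    have hsumw : ∑ y : Fin s → Fin n,
        (if Finset.image y Finset.univ ⊆ T then cw n s y else 0) = ((n.choose s : ℝ))⁻¹ := by
      rw [← WW_def, WW_eq hs hn T hT]
    have hsumpos : (0:ℝ) < ∑ y : Fin s → Fin n,
        (if Finset.image y Finset.univ ⊆ T then cw n s y else 0) := by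
      rw [hsumw]; exact inv_pos.mpr hC
    have hJ := hconv.map_centerMass_le (t := (univ : Finset (Fin s → Fin n)))
      (w := fun y => if Finset.image y Finset.univ ⊆ T then cw n s y else 0)
      (p := fun y => (((univ.filter (fun t => y t ∈ B)).card : ℕ) : ℝ))
      hw0 hsumpos (fun y _ => Set.mem_univ _)
    have hkm := key_mean hs hn B hT
    simp only [Finset.centerMass, smul_eq_mul] at hJ
    rw [hsumw] at hJ
    have hmean : ∑ y : Fin s → Fin n,
        (if Finset.image y Finset.univ ⊆ T then cw n s y else 0)
          * (((univ.filter (fun t => y t ∈ B)).card : ℕ) : ℝ)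
        = ((T ∩ B).card : ℝ) * ((n.choose s : ℝ))⁻¹ := hkm
    rw [hmean, inv_inv] at hJ
    have harg : (n.choose s : ℝ) * (((T ∩ B).card : ℝ) * ((n.choose s : ℝ))⁻¹)
        = ((T ∩ B).card : ℝ) := by
      field_simp
    rw [harg] at hJ
    calc ((n.choose s : ℝ))⁻¹ * f (((T ∩ B).card : ℝ))
        ≤ ((n.choose s : ℝ))⁻¹ * ((n.choose s : ℝ) * ∑ y : Fin s → Fin n,
            (if Finset.image y Finset.univ ⊆ T then cw n s y else 0)
              * f ((((univ.filter (fun t => y t ∈ B)).card : ℕ) : ℝ))) := by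
          apply mul_le_mul_of_nonneg_left _ (le_of_lt (inv_pos.mpr hC))
          exact hJ
      _ = ∑ y : Fin s → Fin n, (if Finset.image y Finset.univ ⊆ T then cw n s y else 0)
            * f ((((univ.filter (fun t => y t ∈ B)).card : ℕ) : ℝ)) := by
          rw [← mul_assoc, inv_mul_cancel₀ (ne_of_gt hC), one_mul]
  -- sum Jensen over T and swap
  have stepB' : ∑ T ∈ P, ((n.choose s : ℝ))⁻¹ * f (((T ∩ B).card : ℝ))
      ≤ ∑ y : Fin s → Fin n, ((n:ℝ)^s)⁻¹ * f (((univ.filter (fun t => y t ∈ B)).card : ℝ)) := by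
    calc ∑ T ∈ P, ((n.choose s : ℝ))⁻¹ * f (((T ∩ B).card : ℝ))
        ≤ ∑ T ∈ P, ∑ y : Fin s → Fin n,
            (if Finset.image y Finset.univ ⊆ T then cw n s y else 0)
              * f (((univ.filter (fun t => y t ∈ B)).card : ℝ)) :=
          Finset.sum_le_sum stepB
      _ = ∑ y : Fin s → Fin n, ((n:ℝ)^s)⁻¹
            * f (((univ.filter (fun t => y t ∈ B)).card : ℝ)) := by
          rw [Finset.sum_comm]
          apply Finset.sum_congr rfl
          intro y _
          rw [← Finset.sum_mul, rowsum hs hn y]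
  refine le_trans stepB' ?_
  -- Step C : identify the RHS
  rw [← Finset.mul_sum, binom_count B hB f]
  rw [Finset.mul_sum]
  apply le_of_eq
  apply Finset.sum_congr rfl
  intro k hk
  rw [Finset.mem_range, Nat.lt_succ_iff] at hk
  have hcast : ((n - s : ℕ) : ℝ) = (n : ℝ) - s := by
    rw [Nat.cast_sub hs]
  have h1ms : 1 - (s:ℝ)/n = ((n - s : ℕ) : ℝ) / n := by
    rw [hcast]
    field_simp
  rw [h1ms]
  push_cast
  rw [div_pow, div_pow]
  have hnk : ((n:ℝ))^k * ((n:ℝ))^(s-k) = ((n:ℝ))^s := by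
    rw [← pow_add]
    congr 1
    omega
  have hn0 : ((n:ℝ))^s ≠ 0 := by positivity
  field_simp
  ring_nf
  rw [← hnk]
  ring

theorem stmt19 (n s : ℕ) (hs : s ≤ n) (hn : 0 < n)
    (A B : Finset (Fin n)) (hA : A.card = s) (hB : B.card = s) :
    (∀ f : ℝ → ℝ, Continuous f → ConvexOn ℝ Set.univ f →
      (∑ π : Equiv.Perm (Fin n), f ((((A.image π) ∩ B).card : ℝ))) / (n.factorial : ℝ)
        ≤ ∑ k ∈ Finset.range (s + 1),
            (s.choose k : ℝ) * ((s : ℝ) / n) ^ k * (1 - (s : ℝ) / n) ^ (s - k) * f k)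
    ∧ ∀ l : ℝ,
      (∑ π : Equiv.Perm (Fin n), Real.exp (l * (((A.image π) ∩ B).card : ℝ)))
          / (n.factorial : ℝ)
        ≤ ∑ k ∈ Finset.range (s + 1),
            (s.choose k : ℝ) * ((s : ℝ) / n) ^ k * (1 - (s : ℝ) / n) ^ (s - k)
              * Real.exp (l * k) := by
  constructor
  · intro f _ hconv
    exact main_ineq hs hn A B hA hB f hconv
  · intro l
    have hconv : ConvexOn ℝ Set.univ (fun x : ℝ => Real.exp (l * x)) := by
      refine ⟨convex_univ, fun x _ y _ a b ha hb hab => ?_⟩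
      simp only [smul_eq_mul]
      have h := convexOn_exp.2 (Set.mem_univ (l*x)) (Set.mem_univ (l*y)) ha hb hab
      simp only [smul_eq_mul] at h
      calc Real.exp (l * (a*x + b*y)) = Real.exp (a*(l*x) + b*(l*y)) := by ring_nf
        _ ≤ a * Real.exp (l*x) + b * Real.exp (l*y) := h
    exact main_ineq hs hn A B hA hB (fun x => Real.exp (l * x)) hconv
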